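/- Let p, r be real numbers with 1 ≤ p and 0 ≤ r. Then for every real x with 0 < x, one has (p + r)·(x^p - 1)·(x^(1+r) - 1) ≤ p·(1 + r)·(x - 1)·(x^(p+r) - 1). -/

import Mathlib

open intervalIntegral Real

noncomputable def Jint (c : ℝ) : ℝ := ∫ u in (0:ℝ)..1, Real.exp (c * u)

lemma Jint_form (c : ℝ) (hc : c ≠ 0) : Jint c = (Real.exp c - 1) / c := by
  unfold Jint
  rw [integral_comp_mul_left (fun z => Real.exp z) hc]
  simp [integral_exp, smul_eq_mul]
  field_simp

lemma rep (x : ℝ) (hx : 0 < x) (t : ℝ) :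
    x ^ t - 1 = t * Real.log x * Jint (Real.log x * t) := by
  by_cases hl : Real.log x = 0
  · have hx1 : x = 1 := by
      rcases Real.log_eq_zero.mp hl with h | h | h
      · exact absurd h (ne_of_gt hx)
      · exact h
      · linarith
    simp [hx1, hl, Real.one_rpow]
  · by_cases ht : t = 0
    · simp [ht]
    · have hc : Real.log x * t ≠ 0 := mul_ne_zero hl ht
      rw [Jint_form _ hc, Real.rpow_def_of_pos hx]
      field_simp

lemma key (l a b u v : ℝ) (ha : 1 ≤ a) (hb : 1 ≤ b) :
    Real.exp (l * a * u + l * b * v) + Real.exp (l * b * u + l * a * v) ≤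
      Real.exp (l * 1 * u + l * (a + b - 1) * v) +
        Real.exp (l * (a + b - 1) * u + l * 1 * v) := by
  set m := l * (a + b) * (u + v) / 2 with hm
  set w := l * (u - v) / 2 with hw
  have h1 : l * a * u + l * b * v = m + (a - b) * w := by rw [hm, hw]; ring
  have h2 : l * b * u + l * a * v = m - (a - b) * w := by rw [hm, hw]; ring
  have h3 : l * 1 * u + l * (a + b - 1) * v = m - (a + b - 2) * w := by rw [hm, hw]; ring
  have h4 : l * (a + b - 1) * u + l * 1 * v = m + (a + b - 2) * w := by rw [hm, hw]; ring
  have e : ∀ d : ℝ, Real.exp (m + d) + Real.exp (m - d)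
      = Real.exp m * (2 * Real.cosh d) := by
    intro d
    rw [Real.cosh_eq, Real.exp_add, Real.exp_sub, Real.exp_neg]
    have hd := Real.exp_ne_zero d
    field_simp
  rw [h1, h2, h3, h4, e,
    add_comm (Real.exp (m - (a + b - 2) * w)) (Real.exp (m + (a + b - 2) * w)), e]
  apply mul_le_mul_of_nonneg_left _ (Real.exp_pos m).le
  have : |(a - b) * w| ≤ |(a + b - 2) * w| := by
    rw [abs_mul, abs_mul]
    apply mul_le_mul_of_nonneg_right _ (abs_nonneg w)
    rw [abs_le]
    constructor
    · have : 0 ≤ a + b - 2 := by linarith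
      rw [abs_of_nonneg this]; linarith
    · have : 0 ≤ a + b - 2 := by linarith
      rw [abs_of_nonneg this]; linarith
  have := Real.cosh_le_cosh.mpr this
  linarith

lemma inner_eq (α β u : ℝ) :
    (∫ v in (0:ℝ)..1, (Real.exp (α * u + β * v) + Real.exp (β * u + α * v)))
      = Real.exp (α * u) * Jint β + Real.exp (β * u) * Jint α := by
  have i1 : IntervalIntegrable (fun v => Real.exp (α * u + β * v)) MeasureTheory.volume 0 1 :=
    (by fun_prop : Continuous fun v => Real.exp (α * u + β * v)).intervalIntegrable 0 1
  have i2 : IntervalIntegrable (fun v => Real.exp (β * u + α * v)) MeasureTheory.volume 0 1 :=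
    (by fun_prop : Continuous fun v => Real.exp (β * u + α * v)).intervalIntegrable 0 1
  rw [integral_add i1 i2]
  simp only [Real.exp_add]
  rw [integral_const_mul, integral_const_mul]
  rfl

lemma outer_eq (α β : ℝ) :
    (∫ u in (0:ℝ)..1, (Real.exp (α * u) * Jint β + Real.exp (β * u) * Jint α))
      = Jint α * Jint β + Jint β * Jint α := by
  have i1 : IntervalIntegrable (fun u => Real.exp (α * u) * Jint β) MeasureTheory.volume 0 1 :=
    (by fun_prop : Continuous fun u => Real.exp (α * u) * Jint β).intervalIntegrable 0 1
  have i2 : IntervalIntegrable (fun u => Real.exp (β * u) * Jint α) MeasureTheory.volume 0 1 :=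
    (by fun_prop : Continuous fun u => Real.exp (β * u) * Jint α).intervalIntegrable 0 1
  rw [integral_add i1 i2]
  rw [integral_mul_const, integral_mul_const]
  rfl

lemma core (l a b : ℝ) (ha : 1 ≤ a) (hb : 1 ≤ b) :
    Jint (l * a) * Jint (l * b) ≤ Jint (l * 1) * Jint (l * (a + b - 1)) := by
  have main : Jint (l * a) * Jint (l * b) + Jint (l * b) * Jint (l * a) ≤
      Jint (l * 1) * Jint (l * (a + b - 1)) + Jint (l * (a + b - 1)) * Jint (l * 1) := by
    rw [← outer_eq, ← outer_eq]
    apply integral_mono_on zero_le_one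
    · exact (by fun_prop : Continuous fun u => Real.exp (l * a * u) * Jint (l * b)
        + Real.exp (l * b * u) * Jint (l * a)).intervalIntegrable 0 1
    · exact (by fun_prop : Continuous fun u => Real.exp (l * 1 * u) * Jint (l * (a + b - 1))
        + Real.exp (l * (a + b - 1) * u) * Jint (l * 1)).intervalIntegrable 0 1
    · intro u _
      rw [← inner_eq, ← inner_eq]
      apply integral_mono_on zero_le_one
      · exact (by fun_prop : Continuous fun v => Real.exp (l * a * u + l * b * v)
          + Real.exp (l * b * u + l * a * v)).intervalIntegrable 0 1
      · exact (by fun_prop : Continuous fun v => Real.exp (l * 1 * u + l * (a + b - 1) * v)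
          + Real.exp (l * (a + b - 1) * u + l * 1 * v)).intervalIntegrable 0 1
      · intro v _
        exact key l a b u v ha hb
  linarith

theorem stmt_1 (p r : ℝ) (hp : 1 ≤ p) (hr : 0 ≤ r) (x : ℝ) (hx : 0 < x) :
    (p + r) * (x ^ p - 1) * (x ^ (1 + r) - 1) ≤
      p * (1 + r) * (x - 1) * (x ^ (p + r) - 1) := by
  set l := Real.log x with hl
  have h1 : x ^ p - 1 = p * l * Jint (l * p) := rep x hx p
  have h2 : x ^ (1 + r) - 1 = (1 + r) * l * Jint (l * (1 + r)) := rep x hx (1 + r)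
  have h3 : x ^ (p + r) - 1 = (p + r) * l * Jint (l * (p + r)) := rep x hx (p + r)
  have h4 : x - 1 = 1 * l * Jint (l * 1) := by
    have := rep x hx 1
    rwa [Real.rpow_one] at this
  rw [h1, h2, h3, h4]
  have hcore : Jint (l * p) * Jint (l * (1 + r)) ≤ Jint (l * 1) * Jint (l * (p + r)) := by
    have := core l p (1 + r) hp (by linarith)
    have heq : p + (1 + r) - 1 = p + r := by ring
    rwa [heq] at this
  nlinarith [mul_self_nonneg l, mul_pos (mul_pos (by linarith : (0:ℝ) < p) (by linarith : (0:ℝ) < 1 + r)) (by linarith : (0:ℝ) < p + r), mul_le_mul_of_nonneg_left hcore (mul_nonneg (mul_nonneg (mul_nonneg (by linarith : (0:ℝ) ≤ p) (by linarith : (0:ℝ) ≤ 1 + r)) (by linarith : (0:ℝ) ≤ p + r)) (mul_self_nonneg l))]
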